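/- Let X be a finite set and let A be an abelian subgroup of Sym(X). Then A is the automorphism group of some k-coloured digraph on X for some k ≥ 1 if and only if A is the automorphism group of some 4-coloured digraph on X (that is, A ∈ DGR if and only if A ∈ DGR(4)). -/

import Mathlib

/-- The orbit of a point `x` under a set `G` of permutations of `X`. -/
def orbitOf {X : Type*} (G : Set (Equiv.Perm X)) (x : X) : Set X :=
  {y | ∃ a ∈ G, a x = y}

/-- A permutation `σ` is 2-orbit-compatible with `G` if for every pair of orbits
`O` and `Q` of `G` there is an element of `G` agreeing with `σ` on `O ∪ Q`. -/
def TwoOrbitCompatible {X : Type*} (G : Set (Equiv.Perm X)) (σ : Equiv.Perm X) : Prop :=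
  ∀ x y : X, ∃ a ∈ G, ∀ z ∈ orbitOf G x ∪ orbitOf G y, σ z = a z

/-- A subgroup `A ≤ Sym(X)` is 2-orbit-closed if every permutation that is
2-orbit-compatible with `A` belongs to `A`. -/
def TwoOrbitClosed {X : Type*} (A : Subgroup (Equiv.Perm X)) : Prop :=
  ∀ σ : Equiv.Perm X, TwoOrbitCompatible (A : Set (Equiv.Perm X)) σ → σ ∈ A

/-- `A` is precisely the automorphism group of the `k`-coloured digraph `γ` on `X`. -/
def IsColDigraphAutGroup {X : Type*} {k : ℕ} (γ : X → X → Fin k)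
    (A : Subgroup (Equiv.Perm X)) : Prop :=
  ∀ σ : Equiv.Perm X, σ ∈ A ↔ ∀ x y : X, x ≠ y → γ (σ x) (σ y) = γ x y

/-- `A ∈ DGR`: `A` is the automorphism group of some coloured digraph on `X`. -/
def InDGR {X : Type*} (A : Subgroup (Equiv.Perm X)) : Prop :=
  ∃ k : ℕ, 1 ≤ k ∧ ∃ γ : X → X → Fin k, IsColDigraphAutGroup γ A

/-- `A ∈ DGR(4)`: `A` is the automorphism group of some 4-coloured digraph on `X`. -/
def InDGR4 {X : Type*} (A : Subgroup (Equiv.Perm X)) : Prop :=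
  ∃ γ : X → X → Fin 4, IsColDigraphAutGroup γ A


open Classical

noncomputable section AuxW

variable {r : ℕ} {n : Fin r → ℕ}

/-- basis vectors -/
def es (n : Fin r → ℕ) (t : Fin r) : ∀ s, ZMod (n s) := Pi.single t 1

lemma esv (t u : Fin r) : es n t u = if u = t then (1 : ZMod (n u)) else 0 := by
  by_cases h : u = t
  · subst h; simp [es, Pi.single_eq_same]
  · simp [es, Pi.single_eq_of_ne h, h]

variable (h2 : ∀ t, 2 ≤ n t)
include h2

lemma zmod_one_ne_zero (t : Fin r) : (1 : ZMod (n t)) ≠ 0 := by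
  haveI : Fact (1 < n t) := ⟨h2 t⟩
  exact one_ne_zero

lemma M4 (t : Fin r) : es n t ≠ 0 := by
  intro h
  have := congrFun h t
  rw [esv, if_pos rfl] at this
  exact zmod_one_ne_zero h2 t this

lemma M3 {s t : Fin r} (h : es n s = es n t) : s = t := by
  by_contra hne
  have := congrFun h s
  rw [esv, esv, if_pos rfl, if_neg hne] at this
  exact zmod_one_ne_zero h2 s this

lemma M2 {p q s : Fin r} (h : es n p + es n q = es n s) : False := by
  by_cases hpq : p = q
  · subst hpq
    by_cases hps : p = s
    · subst hps
      have := congrFun h p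
      simp only [Pi.add_apply, esv, eq_self_iff_true, if_true, if_pos rfl] at this
      exact zmod_one_ne_zero h2 p (by linear_combination this)
    · have := congrFun h s
      simp only [Pi.add_apply, esv, eq_self_iff_true, if_true, if_pos rfl, if_neg (fun hh : s = p => hps hh.symm)] at this
      exact zmod_one_ne_zero h2 s (by linear_combination -this)
  · by_cases hps : p = s
    · subst hps
      have := congrFun h q
      simp only [Pi.add_apply, esv, eq_self_iff_true, if_true, if_pos rfl, if_neg (fun hh : q = p => hpq hh.symm)] at this
      exact zmod_one_ne_zero h2 q (by linear_combination this)
    · have := congrFun h p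
      simp only [Pi.add_apply, esv, eq_self_iff_true, if_true, if_pos rfl, if_neg (fun hh : p = q => hpq hh),
        if_neg (fun hh : p = s => hps hh)] at this
      exact zmod_one_ne_zero h2 p (by linear_combination this)

lemma Mkey {p q s t : Fin r} (h : es n p + es n q = es n s + es n t) :
    (p = s ∧ q = t) ∨ (p = t ∧ q = s) ∨ (p = q ∧ s = t) := by
  by_cases hpq : p = q
  · by_cases hst : s = t
    · exact Or.inr (Or.inr ⟨hpq, hst⟩)
    · exfalso
      subst hpq
      have := congrFun h s
      by_cases hsp : s = p
      · simp only [Pi.add_apply, esv, eq_self_iff_true, if_true, if_pos hsp, if_pos rfl,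
          if_neg (fun hh : s = t => hst hh)] at this
        exact zmod_one_ne_zero h2 s (by linear_combination this)
      · simp only [Pi.add_apply, esv, eq_self_iff_true, if_true, if_neg hsp, if_pos rfl,
          if_neg (fun hh : s = t => hst hh)] at this
        exact zmod_one_ne_zero h2 s (by linear_combination -this)
  · by_cases hst : s = t
    · exfalso
      subst hst
      have := congrFun h p
      by_cases hps : p = s
      · simp only [Pi.add_apply, esv, eq_self_iff_true, if_true, if_pos rfl, if_pos hps,
          if_neg (fun hh : p = q => hpq hh)] at this
        exact zmod_one_ne_zero h2 p (by linear_combination -this)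
      · simp only [Pi.add_apply, esv, eq_self_iff_true, if_true, if_pos rfl, if_neg hps,
          if_neg (fun hh : p = q => hpq hh)] at this
        exact zmod_one_ne_zero h2 p (by linear_combination this)
    · have hp := congrFun h p
      simp only [Pi.add_apply, esv, eq_self_iff_true, if_true, if_pos rfl, if_neg (fun hh : p = q => hpq hh)] at hp
      have hq := congrFun h q
      simp only [Pi.add_apply, esv, eq_self_iff_true, if_true, if_pos rfl, if_neg (fun hh : q = p => hpq hh.symm)] at hq
      by_cases hps : p = s
      · left
        refine ⟨hps, ?_⟩
        by_cases hqt : q = t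
        · exact hqt
        · exfalso
          have hqs : ¬ q = s := fun hh => hpq (hps.trans hh.symm)
          rw [if_neg hqs, if_neg hqt] at hq
          exact zmod_one_ne_zero h2 q (by linear_combination hq)
      · by_cases hpt : p = t
        · right; left
          refine ⟨hpt, ?_⟩
          by_cases hqs : q = s
          · exact hqs
          · exfalso
            have hqt : ¬ q = t := fun hh => hpq (hpt.trans hh.symm)
            rw [if_neg hqs, if_neg hqt] at hq
            exact zmod_one_ne_zero h2 q (by linear_combination hq)
        · exfalso
          rw [if_neg hps, if_neg hpt] at hp
          exact zmod_one_ne_zero h2 p (by linear_combination hp)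


/-- the 4-colouring of a finite abelian group in coordinates -/
def cw (r : ℕ) (n : Fin r → ℕ) (w : ∀ s, ZMod (n s)) : Fin 4 :=
  if (∃ h : 0 < r, w = es n ⟨0, h⟩) then 1
  else if (∃ (l : Fin r) (hl : l.val + 1 < r), w = es n ⟨l.val + 1, hl⟩ - es n l) then 2
  else if (∃ j : Fin r, j.val ≠ 0 ∧ w = es n j) then 3
  else 0

omit h2 in
lemma cw_one_iff {w : ∀ s, ZMod (n s)} :
    cw r n w = 1 ↔ ∃ h : 0 < r, w = es n ⟨0, h⟩ := by
  unfold cw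
  split_ifs with ha hb hc
  · exact iff_of_true rfl ha
  · exact iff_of_false (by decide) ha
  · exact iff_of_false (by decide) ha
  · exact iff_of_false (by decide) ha

lemma cw_two_iff {w : ∀ s, ZMod (n s)} :
    cw r n w = 2 ↔ ∃ (l : Fin r) (hl : l.val + 1 < r), w = es n ⟨l.val + 1, hl⟩ - es n l := by
  unfold cw
  split_ifs with ha hb hc
  · refine iff_of_false (by decide) ?_
    rintro ⟨l, hl, hw⟩
    obtain ⟨h0, he⟩ := ha
    have key : es n ⟨0, h0⟩ + es n l = es n ⟨l.val + 1, hl⟩ := by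
      rw [← he, hw]; abel
    exact M2 h2 key
  · exact iff_of_true rfl hb
  · exact iff_of_false (by decide) hb
  · exact iff_of_false (by decide) hb

lemma cw_three_iff {w : ∀ s, ZMod (n s)} :
    cw r n w = 3 ↔ ∃ j : Fin r, j.val ≠ 0 ∧ w = es n j := by
  unfold cw
  split_ifs with ha hb hc
  · refine iff_of_false (by decide) ?_
    rintro ⟨j, hj, hw⟩
    obtain ⟨h0, he⟩ := ha
    have : es n j = es n ⟨0, h0⟩ := by rw [← he, hw]
    have := M3 h2 this
    apply hj
    rw [this]
  · refine iff_of_false (by decide) ?_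
    rintro ⟨j, hj, hw⟩
    obtain ⟨l, hl, he⟩ := hb
    have key : es n j + es n l = es n ⟨l.val + 1, hl⟩ := by
      rw [← hw, he]; abel
    exact M2 h2 key
  · exact iff_of_true rfl hc
  · exact iff_of_false (by decide) hc

lemma P1 {w : ∀ s, ZMod (n s)} (h3 : cw r n w = 3) (hm : cw r n (-w) = 2) : False := by
  obtain ⟨j, hj, hw⟩ := (cw_three_iff h2).mp h3
  subst hw
  obtain ⟨l, hl, hm'⟩ := (cw_two_iff h2).mp hm
  have key : es n ⟨l.val + 1, hl⟩ + es n j = es n l := by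
    linear_combination -hm'
  exact M2 h2 key

lemma cw_es_ne_zero (t : Fin r) : cw r n (es n t) ≠ 0 := by
  by_cases h0 : t.val = 0
  · have h1 : cw r n (es n t) = 1 := by
      refine cw_one_iff.mpr ⟨t.pos, ?_⟩
      exact congrArg (es n) (Fin.ext h0)
    rw [h1]; decide
  · have h3 : cw r n (es n t) = 3 := (cw_three_iff h2).mpr ⟨t, h0, rfl⟩
    rw [h3]; decide

lemma genW (T : AddSubgroup (∀ s, ZMod (n s))) (hT : ∀ t, es n t ∈ T) :
    ∀ w, w ∈ T := by
  intro w
  have hw : w = ∑ t, Pi.single t (w t) := (Finset.univ_sum_single w).symm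
  rw [hw]
  refine AddSubgroup.sum_mem T fun t _ => ?_
  have : Pi.single t (w t) = (w t).val • es n t := by
    unfold es
    rw [← Pi.single_smul]
    haveI : NeZero (n t) := ⟨by have := h2 t; omega⟩
    rw [nsmul_eq_mul, mul_one]
    exact congrArg (Pi.single t) (ZMod.natCast_rightInverse (w t)).symm
  rw [this]
  exact AddSubgroup.nsmul_mem T (hT t) _

lemma rigidity (f : (∀ s, ZMod (n s)) → (∀ s, ZMod (n s))) (hinj : Function.Injective f)
    (hc : ∀ x y, x ≠ y → cw r n (f y - f x) = cw r n (y - x)) :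
    ∀ x y, f y = f x + (y - x) := by
  have key : ∀ (N : ℕ), ∀ (hN : N < r) (x : ∀ s, ZMod (n s)),
      f (x + es n ⟨N, hN⟩) = f x + es n ⟨N, hN⟩ := by
    intro N
    induction N using Nat.strong_induction_on with
    | _ N IH =>
      intro hN x
      have hne : x ≠ x + es n ⟨N, hN⟩ := by
        intro hh
        exact M4 h2 _ (left_eq_add.mp hh)
      have hdiff : (x + es n ⟨N, hN⟩) - x = es n ⟨N, hN⟩ := by abel
      have hcolor := hc x (x + es n ⟨N, hN⟩) hne
      rw [hdiff] at hcolor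
      by_cases h0 : N = 0
      · subst h0
        have h1 : cw r n (es n ⟨0, hN⟩) = 1 := cw_one_iff.mpr ⟨hN, rfl⟩
        rw [h1] at hcolor
        obtain ⟨hr, he⟩ := cw_one_iff.mp hcolor
        have hee : es n ⟨0, hr⟩ = es n ⟨0, hN⟩ := rfl
        rw [hee] at he
        exact eq_add_of_sub_eq' he
      · obtain ⟨M, rfl⟩ := Nat.exists_eq_succ_of_ne_zero h0
        have hM : M < r := Nat.lt_of_succ_lt hN
        -- colour 3 forcing
        have h3 : cw r n (es n ⟨M + 1, hN⟩) = 3 :=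
          (cw_three_iff h2).mpr ⟨⟨M + 1, hN⟩, Nat.succ_ne_zero M, rfl⟩
        rw [h3] at hcolor
        obtain ⟨j, hj0, hj⟩ := (cw_three_iff h2).mp hcolor
        -- colour 2 forcing
        have hne2 : x + es n ⟨M, hM⟩ ≠ x + es n ⟨M + 1, hN⟩ := by
          intro hh
          have : es n ⟨M, hM⟩ = es n ⟨M + 1, hN⟩ := add_left_cancel hh
          have hv : M = M + 1 := congrArg Fin.val (M3 h2 this)
          omega
        have hstep := hc (x + es n ⟨M, hM⟩) (x + es n ⟨M + 1, hN⟩) hne2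
        have hdiff2 : (x + es n ⟨M + 1, hN⟩) - (x + es n ⟨M, hM⟩)
            = es n ⟨M + 1, hN⟩ - es n ⟨M, hM⟩ := by abel
        rw [hdiff2] at hstep
        have h2c : cw r n (es n ⟨M + 1, hN⟩ - es n ⟨M, hM⟩) = 2 :=
          (cw_two_iff h2).mpr ⟨⟨M, hM⟩, hN, rfl⟩
        rw [h2c] at hstep
        obtain ⟨l, hl, hle⟩ := (cw_two_iff h2).mp hstep
        -- rewrite using IH at M and hj
        have hIH : f (x + es n ⟨M, hM⟩) = f x + es n ⟨M, hM⟩ := IH M (Nat.lt_succ_self M) hM x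
        have hfj : f (x + es n ⟨M + 1, hN⟩) = f x + es n j := eq_add_of_sub_eq' hj
        rw [hfj, hIH] at hle
        have heq : es n j + es n l = es n ⟨l.val + 1, hl⟩ + es n ⟨M, hM⟩ := by
          linear_combination hle
        rcases Mkey h2 heq with ⟨hj1, hj2⟩ | ⟨hj1, hj2⟩ | ⟨hj1, hj2⟩
        · -- j = l+1, l = M : desired
          have h1 : j.val = l.val + 1 := congrArg Fin.val hj1
          have h2' : l.val = M := congrArg Fin.val hj2
          have hjN : j = ⟨M + 1, hN⟩ := Fin.ext (show j.val = M + 1 by omega)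
          rw [hfj, hjN]
        · exfalso
          have h2' : l.val = l.val + 1 := by conv_lhs => rw [hj2]
          omega
        · -- j = l, l+1 = M : impossible via injectivity
          exfalso
          have hlM : l.val + 1 = M := congrArg Fin.val hj2
          have hjl : j.val = l.val := congrArg Fin.val hj1
          have hIHj : f (x + es n j) = f x + es n j := by
            have hjM : j.val < M + 1 := by omega
            have := IH j.val hjM j.isLt x
            have hjeq : (⟨j.val, j.isLt⟩ : Fin r) = j := Fin.ext rfl
            rwa [hjeq] at this
          have hsame : f (x + es n ⟨M + 1, hN⟩) = f (x + es n j) := by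
            rw [hfj, hIHj]
          have heq2 := hinj hsame
          have hes : es n ⟨M + 1, hN⟩ = es n j := add_left_cancel heq2
          have hval : (⟨M + 1, hN⟩ : Fin r).val = j.val := congrArg Fin.val (M3 h2 hes)
          have : M + 1 = j.val := hval
          omega
  -- subgroup argument
  let T : AddSubgroup (∀ s, ZMod (n s)) :=
    { carrier := {d | ∀ x, f (x + d) = f x + d}
      zero_mem' := by intro x; simp
      add_mem' := by
        intro d d' hd hd' x
        have h1 : x + (d + d') = (x + d) + d' := by abel
        rw [h1, hd' (x + d), hd x]
        abel
      neg_mem' := by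
        intro d hd x
        have h1 : (x + -d) + d = x := by abel
        have := hd (x + -d)
        rw [h1] at this
        rw [this]
        abel }
  have hTall : ∀ w, w ∈ T := by
    refine genW h2 T fun t => ?_
    intro x
    exact key t.val t.isLt x
  intro x y
  have := hTall (y - x) x
  have hxy : x + (y - x) = y := by abel
  rwa [hxy] at this


omit h2 in
lemma exists_coords (G : Type*) [CommGroup G] [Finite G] :
    ∃ (r : ℕ) (n : Fin r → ℕ), (∀ t, 2 ≤ n t) ∧
      ∃ ρ : G → (∀ t, ZMod (n t)), Function.Bijective ρ ∧ ∀ a b, ρ (a * b) = ρ a + ρ b := by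
  obtain ⟨ι, hι, nn, h1, ⟨e⟩⟩ := CommGroup.equiv_prod_multiplicative_zmod_of_finite G
  let κ : Fin (Fintype.card ι) ≃ ι := (Fintype.equivFin ι).symm
  let M : ι → Type := fun i => Multiplicative (ZMod (nn i))
  let Ψ : (∀ i, M i) ≃ (∀ t, M (κ t)) := Equiv.piCongrLeft' M κ.symm
  refine ⟨Fintype.card ι, fun t => nn (κ t), fun t => h1 _,
    fun g t => Multiplicative.toAdd (Ψ (e g) t), ⟨?_, ?_⟩, ?_⟩
  · intro a b hab
    apply e.injective
    apply Ψ.injective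
    funext t
    exact Multiplicative.toAdd.injective (congrFun hab t)
  · intro w
    refine ⟨e.symm (Ψ.symm (fun t => Multiplicative.ofAdd (w t))), ?_⟩
    funext t
    show Multiplicative.toAdd
      (Ψ (e (e.symm (Ψ.symm fun t => Multiplicative.ofAdd (w t)))) t) = w t
    rw [e.apply_symm_apply, Ψ.apply_symm_apply]
    rfl
  · intro a b
    funext t
    show Multiplicative.toAdd (Ψ (e (a * b)) t)
      = Multiplicative.toAdd (Ψ (e a) t) + Multiplicative.toAdd (Ψ (e b) t)
    have h : Ψ (e (a * b)) t = Ψ (e a) t * Ψ (e b) t := by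
      rw [map_mul]
      rfl
    rw [h]
    rfl

omit h2 in
lemma exists_chart {X : Type*} [Fintype X] (A : Subgroup (Equiv.Perm X))
    (hab : ∀ a ∈ A, ∀ b ∈ A, a * b = b * a) (p : X) :
    ∃ (r : ℕ) (n : Fin r → ℕ), (∀ t, 2 ≤ n t) ∧
      ∃ (co : X → (∀ t, ZMod (n t))) (θ : Equiv.Perm X → (∀ t, ZMod (n t))),
        (∀ x y, (∃ a ∈ A, a p = x) → (∃ a ∈ A, a p = y) → co x = co y → x = y) ∧
        (∀ w, ∃ x, (∃ a ∈ A, a p = x) ∧ co x = w) ∧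
        (∀ a ∈ A, ∀ x, (∃ b ∈ A, b p = x) → co (a x) = θ a + co x) ∧
        (∀ w, ∃ a ∈ A, θ a = w) := by
  classical
  letI : CommGroup ↥A :=
    { (inferInstance : Group ↥A) with
      mul_comm := fun a b => Subtype.ext (hab a.1 a.2 b.1 b.2) }
  let K : Subgroup ↥A :=
    { carrier := {a | (a : Equiv.Perm X) p = p}
      one_mem' := by simp
      mul_mem' := by
        intro a b ha hb
        show ((a * b : ↥A) : Equiv.Perm X) p = p
        rw [Subgroup.coe_mul, Equiv.Perm.mul_apply, hb, ha]
      inv_mem' := by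
        intro a ha
        show ((a : Equiv.Perm X))⁻¹ p = p
        rw [Equiv.Perm.inv_eq_iff_eq]
        exact ha.symm }
  have memK : ∀ a : ↥A, a ∈ K ↔ (a : Equiv.Perm X) p = p := fun a => Iff.rfl
  haveI : Finite (↥A ⧸ K) := Quotient.finite _
  obtain ⟨r, n, h2, ρ, hbij, hadd⟩ := exists_coords (↥A ⧸ K)
  have mk_eq : ∀ a b : ↥A, (a : Equiv.Perm X) p = (b : Equiv.Perm X) p →
      (QuotientGroup.mk a : ↥A ⧸ K) = QuotientGroup.mk b := by
    intro a b hpe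
    rw [QuotientGroup.eq]
    rw [memK]
    rw [Subgroup.coe_mul, Equiv.Perm.mul_apply, ← hpe]
    simp
  set co : X → (∀ t, ZMod (n t)) := fun x =>
    if h : ∃ a ∈ A, a p = x then ρ (QuotientGroup.mk ⟨h.choose, h.choose_spec.1⟩) else 0
    with hco_def
  set θ : Equiv.Perm X → (∀ t, ZMod (n t)) := fun g =>
    if h : g ∈ A then ρ (QuotientGroup.mk ⟨g, h⟩) else 0 with hθ_def
  have co_spec : ∀ (a : Equiv.Perm X) (ha : a ∈ A) (x : X), a p = x →
      co x = ρ (QuotientGroup.mk ⟨a, ha⟩) := by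
    intro a ha x hax
    have hex : ∃ a' ∈ A, a' p = x := ⟨a, ha, hax⟩
    simp only [hco_def, dif_pos hex]
    exact congrArg ρ
      (mk_eq ⟨hex.choose, hex.choose_spec.1⟩ ⟨a, ha⟩ (by rw [hex.choose_spec.2, hax]))
  refine ⟨r, n, h2, co, θ, ?_, ?_, ?_, ?_⟩
  · -- injectivity on the orbit
    intro x y hx hy hco
    obtain ⟨a, ha, hax⟩ := hx
    obtain ⟨b, hb, hby⟩ := hy
    rw [co_spec a ha x hax, co_spec b hb y hby] at hco
    have := hbij.1 hco
    rw [QuotientGroup.eq, memK, Subgroup.coe_mul, Equiv.Perm.mul_apply] at this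
    have hba : b p = a p := by
      have := congrArg (a : Equiv.Perm X) this
      simpa using this
    rw [← hax, ← hby, hba]
  · -- surjectivity onto W
    intro w
    obtain ⟨h, hh⟩ := hbij.2 w
    obtain ⟨c, rfl⟩ := QuotientGroup.mk_surjective h
    refine ⟨(c : Equiv.Perm X) p, ⟨c, c.2, rfl⟩, ?_⟩
    rw [co_spec (c : Equiv.Perm X) c.2 _ rfl, ← hh]
  · -- equivariance
    intro a ha x hx
    obtain ⟨b, hb, hbp⟩ := hx
    have h1 : (a * b) p = a x := by
      rw [Equiv.Perm.mul_apply, hbp]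
    rw [co_spec (a * b) (mul_mem ha hb) (a x) h1, co_spec b hb x hbp]
    have hθ : θ a = ρ (QuotientGroup.mk ⟨a, ha⟩) := by
      simp only [hθ_def, dif_pos ha]
    have hsub : (⟨a * b, mul_mem ha hb⟩ : ↥A) = ⟨a, ha⟩ * ⟨b, hb⟩ := Subtype.ext rfl
    rw [hθ, hsub, QuotientGroup.mk_mul, hadd]
  · -- surjectivity of θ
    intro w
    obtain ⟨h, hh⟩ := hbij.2 w
    obtain ⟨c, rfl⟩ := QuotientGroup.mk_surjective h
    refine ⟨(c : Equiv.Perm X), c.2, ?_⟩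
    simp only [hθ_def, dif_pos c.2, ← hh]


omit h2 in
lemma main_construction {X : Type*} [Fintype X] (A : Subgroup (Equiv.Perm X))
    (hab : ∀ a ∈ A, ∀ b ∈ A, a * b = b * a) :
    ∃ δ : X → X → Fin 4,
      (∀ a ∈ A, ∀ x y : X, δ (a x) (a y) = δ x y) ∧
      (∀ σ : Equiv.Perm X, (∀ x y : X, x ≠ y → δ (σ x) (σ y) = δ x y) →
        ∀ x y : X, ∃ c ∈ A, σ x = c x ∧ σ y = c y) := by
  classical
  -- the orbit partition
  let st : Setoid X :=
    ⟨fun x y => ∃ a ∈ A, a x = y,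
      ⟨fun x => ⟨1, one_mem A, rfl⟩,
       fun {x y} h => by
         obtain ⟨a, ha, rfl⟩ := h
         exact ⟨a⁻¹, inv_mem ha, by simp⟩,
       fun {x y z} h1 h2 => by
         obtain ⟨a, ha, rfl⟩ := h1
         obtain ⟨b, hb, rfl⟩ := h2
         exact ⟨b * a, mul_mem hb ha, by rw [Equiv.Perm.mul_apply]⟩⟩⟩
  let Ω := Quotient st
  let orb : X → Ω := Quotient.mk st
  haveI : Finite Ω := Quotient.finite st
  haveI : Fintype Ω := Fintype.ofFinite Ω
  let eΩ : Ω ≃ Fin (Fintype.card Ω) := Fintype.equivFin Ω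
  let bp : Ω → X := Quotient.out
  have horb_bp : ∀ ω : Ω, orb (bp ω) = ω := fun ω => Quotient.out_eq ω
  have horb_eq : ∀ x y : X, orb x = orb y ↔ ∃ a ∈ A, a x = y :=
    fun x y => ⟨fun h => Quotient.exact h, fun h => Quotient.sound h⟩
  have horb_act : ∀ a ∈ A, ∀ x, orb (a x) = orb x := by
    intro a ha x
    exact (horb_eq (a x) x).mpr ⟨a⁻¹, inv_mem ha, by simp⟩
  have hmem : ∀ (x : X) (ω : Ω), orb x = ω ↔ ∃ a ∈ A, a (bp ω) = x := by
    intro x ω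
    constructor
    · intro h
      have : orb (bp ω) = orb x := by rw [horb_bp, h]
      exact (horb_eq _ _).mp this
    · rintro ⟨a, ha, rfl⟩
      rw [horb_act a ha, horb_bp]
  -- charts on each orbit
  have hch := fun ω : Ω => exists_chart A hab (bp ω)
  choose r n h2 co θ hinj hsurj hequiv hθsurj using hch
  have hinj' : ∀ ω (x y : X), orb x = ω → orb y = ω → co ω x = co ω y → x = y :=
    fun ω x y hx hy => hinj ω x y ((hmem x ω).mp hx) ((hmem y ω).mp hy)
  have hsurj' : ∀ ω w, ∃ x, orb x = ω ∧ co ω x = w := by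
    intro ω w
    obtain ⟨x, hx, hw⟩ := hsurj ω w
    exact ⟨x, (hmem x ω).mpr hx, hw⟩
  have hequiv' : ∀ (ω : Ω), ∀ a ∈ A, ∀ x, orb x = ω → co ω (a x) = θ ω a + co ω x :=
    fun ω a ha x hx => hequiv ω a ha x ((hmem x ω).mp hx)
  -- special (basepoint) pairs
  let Sp : X → X → Prop := fun x y => ∃ a ∈ A, a (bp (orb x)) = x ∧ a (bp (orb y)) = y
  have hSp_swap : ∀ x y, Sp x y → Sp y x := by
    rintro x y ⟨a, ha, h1, h2⟩
    exact ⟨a, ha, h2, h1⟩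
  -- the 4-colouring
  set δ : X → X → Fin 4 := fun x y =>
    if orb x = orb y then cw (r (orb x)) (n (orb x)) (co (orb x) y - co (orb x) x)
    else if Sp x y then (if (eΩ (orb x)).val < (eΩ (orb y)).val then 3 else 2) else 0
    with hδdef
  have hδ_within : ∀ (ω : Ω) (x y : X), orb x = ω → orb y = ω →
      δ x y = cw (r ω) (n ω) (co ω y - co ω x) := by
    intro ω x y hx hy
    subst hx
    simp only [hδdef]
    rw [if_pos hy.symm]
  have hδ_cross : ∀ x y : X, orb x ≠ orb y →
      δ x y = if Sp x y then (if (eΩ (orb x)).val < (eΩ (orb y)).val then 3 else 2) else 0 := by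
    intro x y h
    simp only [hδdef]
    rw [if_neg h]
  -- invariance under A
  have hInv : ∀ a ∈ A, ∀ x y : X, δ (a x) (a y) = δ x y := by
    intro a ha x y
    by_cases h : orb x = orb y
    · have hx' : orb (a x) = orb x := horb_act a ha x
      have hy' : orb (a y) = orb x := by rw [horb_act a ha y, ← h]
      rw [hδ_within (orb x) x y rfl h.symm,
        hδ_within (orb x) (a x) (a y) hx' hy',
        hequiv' (orb x) a ha x rfl, hequiv' (orb x) a ha y h.symm]
      congr 1
      abel
    · have h' : orb (a x) ≠ orb (a y) := by
        rw [horb_act a ha x, horb_act a ha y]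
        exact h
      rw [hδ_cross _ _ h', hδ_cross _ _ h]
      have hSp_iff : Sp (a x) (a y) ↔ Sp x y := by
        constructor
        · rintro ⟨c, hc, h1, h2⟩
          rw [horb_act a ha x] at h1
          rw [horb_act a ha y] at h2
          refine ⟨a⁻¹ * c, mul_mem (inv_mem ha) hc, ?_, ?_⟩
          · rw [Equiv.Perm.mul_apply, h1]
            simp
          · rw [Equiv.Perm.mul_apply, h2]
            simp
        · rintro ⟨c, hc, h1, h2⟩
          refine ⟨a * c, mul_mem ha hc, ?_, ?_⟩
          · rw [horb_act a ha x, Equiv.Perm.mul_apply, h1]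
          · rw [horb_act a ha y, Equiv.Perm.mul_apply, h2]
      simp only [horb_act a ha x, horb_act a ha y, hSp_iff]
  refine ⟨δ, hInv, ?_⟩
  intro σ hσ
  -- σ⁻¹ also preserves δ
  have hσinv : ∀ x y : X, x ≠ y → δ (σ⁻¹ x) (σ⁻¹ y) = δ x y := by
    intro x y hxy
    have hne : σ⁻¹ x ≠ σ⁻¹ y := fun hh => hxy (by
      rw [← Equiv.apply_symm_apply σ x, ← Equiv.Perm.coe_inv, hh, Equiv.Perm.coe_inv, Equiv.apply_symm_apply])
    have := hσ (σ⁻¹ x) (σ⁻¹ y) hne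
    rw [Equiv.Perm.coe_inv, Equiv.apply_symm_apply, Equiv.apply_symm_apply] at this
    exact this.symm
  -- Step A : any δ-preserving permutation respects the orbit partition
  have stepA : ∀ π : Equiv.Perm X, (∀ x y : X, x ≠ y → δ (π x) (π y) = δ x y) →
      ∀ x y : X, orb x = orb y → orb (π x) = orb (π y) := by
    intro π hπ
    have hA1 : ∀ x y : X, orb x = orb y → x ≠ y → δ x y ≠ 0 → orb (π x) = orb (π y) := by
      intro x y hxy hne hnz
      by_contra hor
      have hv1 : δ (π x) (π y) = δ x y := hπ x y hne
      have hv2 : δ (π y) (π x) = δ y x := hπ y x hne.symm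
      have hnz' : δ (π x) (π y) ≠ 0 := by rw [hv1]; exact hnz
      rw [hδ_cross (π x) (π y) hor] at hv1 hnz'
      by_cases hSp : Sp (π x) (π y)
      · rw [if_pos hSp] at hv1
        have hSp2 : Sp (π y) (π x) := hSp_swap _ _ hSp
        rw [hδ_cross (π y) (π x) (Ne.symm hor), if_pos hSp2] at hv2
        rw [hδ_within (orb x) x y rfl hxy.symm] at hv1
        rw [hδ_within (orb x) y x hxy.symm rfl] at hv2
        have hd : co (orb x) x - co (orb x) y = -(co (orb x) y - co (orb x) x) := by abel
        rw [hd] at hv2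
        rcases lt_trichotomy (eΩ (orb (π x))).val (eΩ (orb (π y))).val with hlt | heq | hgt
        · rw [if_pos hlt] at hv1
          rw [if_neg (by omega)] at hv2
          exact P1 (h2 (orb x)) hv1.symm hv2.symm
        · exact hor (eΩ.injective (Fin.ext heq))
        · rw [if_neg (by omega)] at hv1
          rw [if_pos hgt] at hv2
          refine P1 (h2 (orb x)) hv2.symm ?_
          rw [neg_neg]
          exact hv1.symm
      · rw [if_neg hSp] at hnz'
        exact hnz' rfl
    intro x y hxy
    obtain ⟨g, hg⟩ := Classical.axiomOfChoice (hsurj' (orb x))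
    have hg1 : ∀ w, orb (g w) = orb x := fun w => (hg w).1
    have hg2 : ∀ w, co (orb x) (g w) = w := fun w => (hg w).2
    have hgx : g (co (orb x) x) = x := hinj' (orb x) _ x (hg1 _) rfl (hg2 _)
    have hgy : g (co (orb x) y) = y := hinj' (orb x) _ y (hg1 _) hxy.symm (hg2 _)
    let T : AddSubgroup (∀ t, ZMod (n (orb x) t)) :=
      { carrier := {d | ∀ w, orb (π (g (w + d))) = orb (π (g w))}
        zero_mem' := by intro w; rw [add_zero]
        add_mem' := by
          intro d d' hd hd' w
          have h1 : w + (d + d') = (w + d) + d' := by abel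
          rw [h1, hd' (w + d), hd w]
        neg_mem' := by
          intro d hd w
          have h1 : (w + -d) + d = w := by abel
          have := hd (w + -d)
          rw [h1] at this
          exact this.symm }
    have hT : ∀ t, es (n (orb x)) t ∈ T := by
      intro t w
      have hco : co (orb x) (g (w + es (n (orb x)) t)) - co (orb x) (g w)
          = es (n (orb x)) t := by
        rw [hg2, hg2, add_sub_cancel_left]
      have hne : g w ≠ g (w + es (n (orb x)) t) := by
        intro hh
        apply M4 (h2 (orb x)) t
        have := congrArg (co (orb x)) hh
        rw [hg2, hg2] at this
        exact (left_eq_add.mp this)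
      refine (hA1 (g w) (g (w + es (n (orb x)) t)) (by rw [hg1, hg1]) hne ?_).symm
      rw [hδ_within (orb x) _ _ (hg1 _) (hg1 _), hco]
      exact cw_es_ne_zero (h2 (orb x)) t
    have hTall := genW (h2 (orb x)) T hT
    have hmem' := hTall (co (orb x) y - co (orb x) x) (co (orb x) x)
    rw [add_sub_cancel] at hmem'
    rw [hgx, hgy] at hmem'
    exact hmem'.symm
  -- orbit images
  have hτ : ∀ x : X, orb (σ x) = orb (σ (bp (orb x))) :=
    fun x => stepA σ hσ x (bp (orb x)) (horb_bp _).symm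
  have hτ' : ∀ x : X, orb (σ⁻¹ x) = orb (σ⁻¹ (bp (orb x))) :=
    fun x => stepA σ⁻¹ hσinv x (bp (orb x)) (horb_bp _).symm
  let τ : Ω → Ω := fun ω => orb (σ (bp ω))
  let τ' : Ω → Ω := fun ω => orb (σ⁻¹ (bp ω))
  have hττ' : ∀ ω, τ' (τ ω) = ω := by
    intro ω
    show orb (σ⁻¹ (bp (τ ω))) = ω
    have h1 : orb (bp (τ ω)) = orb (σ (bp ω)) := horb_bp _
    have h3 := stepA σ⁻¹ hσinv (bp (τ ω)) (σ (bp ω)) h1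
    rw [h3, Equiv.Perm.coe_inv, Equiv.symm_apply_apply, horb_bp]
  have hτ'τ : ∀ ω, τ (τ' ω) = ω := by
    intro ω
    show orb (σ (bp (τ' ω))) = ω
    have h1 : orb (bp (τ' ω)) = orb (σ⁻¹ (bp ω)) := horb_bp _
    have h3 := stepA σ hσ (bp (τ' ω)) (σ⁻¹ (bp ω)) h1
    rw [h3, Equiv.Perm.coe_inv, Equiv.apply_symm_apply, horb_bp]
  -- order preservation for any δ-preserving permutation
  have hordpres : ∀ (π : Equiv.Perm X), (∀ x y : X, x ≠ y → δ (π x) (π y) = δ x y) →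
      ∀ (ν : Ω → Ω), (∀ x, orb (π x) = ν (orb x)) → Function.Injective ν →
      ∀ ω ω', ω ≠ ω' → (eΩ ω).val < (eΩ ω').val → (eΩ (ν ω)).val < (eΩ (ν ω')).val := by
    intro π hπ ν hν hνinj ω ω' hne hlt
    have hbp_ne : bp ω ≠ bp ω' := by
      intro hh
      apply hne
      rw [← horb_bp ω, ← horb_bp ω', hh]
    have hSp1 : Sp (bp ω) (bp ω') := by
      refine ⟨1, one_mem A, ?_, ?_⟩
      · rw [horb_bp ω]; rfl
      · rw [horb_bp ω']; rfl
    have hδ1 : δ (bp ω) (bp ω') = 3 := by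
      rw [hδ_cross _ _ (by rw [horb_bp, horb_bp]; exact hne), if_pos hSp1]
      rw [horb_bp, horb_bp]
      rw [if_pos hlt]
    have hδ2 : δ (π (bp ω)) (π (bp ω')) = 3 := by rw [hπ _ _ hbp_ne, hδ1]
    have ho1 : orb (π (bp ω)) = ν ω := by rw [hν, horb_bp]
    have ho2 : orb (π (bp ω')) = ν ω' := by rw [hν, horb_bp]
    have hνne : orb (π (bp ω)) ≠ orb (π (bp ω')) := by
      rw [ho1, ho2]
      exact fun hh => hne (hνinj hh)
    rw [hδ_cross _ _ hνne] at hδ2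
    simp only [ho1, ho2] at hδ2
    by_cases hs : Sp (π (bp ω)) (π (bp ω'))
    · rw [if_pos hs] at hδ2
      by_cases hv : (eΩ (ν ω)).val < (eΩ (ν ω')).val
      · exact hv
      · rw [if_neg hv] at hδ2
        exact absurd hδ2 (by decide)
    · rw [if_neg hs] at hδ2
      exact absurd hδ2 (by decide)
  -- le_apply
  have le_apply : ∀ (ν : Ω → Ω),
      (∀ ω ω', ω ≠ ω' → (eΩ ω).val < (eΩ ω').val → (eΩ (ν ω)).val < (eΩ (ν ω')).val) →
      ∀ ω, (eΩ ω).val ≤ (eΩ (ν ω)).val := by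
    intro ν hmono
    have key : ∀ k : ℕ, ∀ ω : Ω, (eΩ ω).val = k → k ≤ (eΩ (ν ω)).val := by
      intro k
      induction k using Nat.strong_induction_on with
      | _ k IH =>
        intro ω hk
        rcases Nat.eq_zero_or_pos k with h0 | hpos
        · omega
        · obtain ⟨m, rfl⟩ : ∃ m, k = m + 1 := ⟨k - 1, by omega⟩
          have hmlt : m < Fintype.card Ω := by
            have := (eΩ ω).isLt
            omega
          set ω₀ := eΩ.symm ⟨m, hmlt⟩ with hω₀
          have hval0 : (eΩ ω₀).val = m := by rw [hω₀, Equiv.apply_symm_apply]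
          have hne : ω₀ ≠ ω := by
            intro hh
            rw [hh] at hval0
            omega
          have hlt0 : (eΩ ω₀).val < (eΩ ω).val := by omega
          have := hmono ω₀ ω hne hlt0
          have hIH := IH m (Nat.lt_succ_self m) ω₀ hval0
          omega
    intro ω
    exact key (eΩ ω).val ω rfl
  -- τ is the identity
  have hτfix : ∀ ω : Ω, orb (σ (bp ω)) = ω := by
    have hτinj : Function.Injective τ := Function.LeftInverse.injective hττ'
    have hτ'inj : Function.Injective τ' := Function.LeftInverse.injective hτ'τ
    have hmono : ∀ ω ω', ω ≠ ω' → (eΩ ω).val < (eΩ ω').val →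
        (eΩ (τ ω)).val < (eΩ (τ ω')).val :=
      hordpres σ hσ τ hτ hτinj
    have hmono' : ∀ ω ω', ω ≠ ω' → (eΩ ω).val < (eΩ ω').val →
        (eΩ (τ' ω)).val < (eΩ (τ' ω')).val :=
      hordpres σ⁻¹ hσinv τ' hτ' hτ'inj
    intro ω
    have h1 := le_apply τ hmono ω
    have h2' := le_apply τ' hmono' (τ ω)
    rw [hττ'] at h2'
    have : (eΩ (τ ω)).val = (eΩ ω).val := by omega
    have : τ ω = ω := eΩ.injective (Fin.ext this)
    exact this
  have horbσ : ∀ x : X, orb (σ x) = orb x := by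
    intro x
    rw [hτ x, hτfix (orb x)]
  -- Step B : on each orbit, σ agrees with an element of A
  have hB : ∀ ω : Ω, ∃ b ∈ A, ∀ x, orb x = ω → σ x = b x := by
    intro ω
    obtain ⟨g, hg⟩ := Classical.axiomOfChoice (hsurj' ω)
    have hg1 : ∀ w, orb (g w) = ω := fun w => (hg w).1
    have hg2 : ∀ w, co ω (g w) = w := fun w => (hg w).2
    have hπorb : ∀ x, orb x = ω → orb (σ x) = ω := by
      intro x hx
      rw [horbσ, hx]
    set f : (∀ t, ZMod (n ω t)) → (∀ t, ZMod (n ω t)) := fun w => co ω (σ (g w)) with hfdef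
    have hinjf : Function.Injective f := by
      intro w w' hww
      have h1 : σ (g w) = σ (g w') :=
        hinj' ω _ _ (hπorb _ (hg1 _)) (hπorb _ (hg1 _)) hww
      have h2' : g w = g w' := σ.injective h1
      have := congrArg (co ω) h2'
      rwa [hg2, hg2] at this
    have hcf : ∀ w w', w ≠ w' → cw (r ω) (n ω) (f w' - f w) = cw (r ω) (n ω) (w' - w) := by
      intro w w' hww
      have hne : g w ≠ g w' := by
        intro hh
        apply hww
        have := congrArg (co ω) hh
        rwa [hg2, hg2] at this
      have h1 := hσ (g w) (g w') hne
      rw [hδ_within ω (g w) (g w') (hg1 _) (hg1 _), hg2, hg2] at h1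
      rw [hδ_within ω (σ (g w)) (σ (g w')) (hπorb _ (hg1 _)) (hπorb _ (hg1 _))] at h1
      exact h1
    have hrig := rigidity (h2 ω) f hinjf hcf
    obtain ⟨b, hbA, hθb⟩ := hθsurj ω (f 0)
    refine ⟨b, hbA, ?_⟩
    intro x hx
    have hgx : g (co ω x) = x := hinj' ω _ _ (hg1 _) hx (hg2 _)
    have h1 : co ω (σ x) = f 0 + co ω x := by
      have := hrig 0 (co ω x)
      rw [sub_zero] at this
      calc co ω (σ x) = f (co ω x) := by rw [hfdef]; simp only []; rw [hgx]
        _ = f 0 + co ω x := this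
    have h2b : co ω (b x) = f 0 + co ω x := by
      rw [hequiv' ω b hbA x hx, hθb]
    exact hinj' ω (σ x) (b x) (hπorb x hx) (by rw [horb_act b hbA, hx]) (h1.trans h2b.symm)
  -- Step C : pairwise agreement
  intro x y
  by_cases h : orb x = orb y
  · obtain ⟨b, hbA, hb⟩ := hB (orb x)
    exact ⟨b, hbA, hb x rfl, hb y h.symm⟩
  · obtain ⟨b, hbA, hb⟩ := hB (orb x)
    obtain ⟨b', hb'A, hb'⟩ := hB (orb y)
    set p := bp (orb x) with hp
    set p' := bp (orb y) with hp'
    have horb_p : orb p = orb x := horb_bp _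
    have horb_p' : orb p' = orb y := horb_bp _
    have hne : p ≠ p' := by
      intro hh
      apply h
      rw [← horb_p, ← horb_p', hh]
    have hSp1 : Sp p p' := ⟨1, one_mem A, by rw [horb_p, ← hp]; rfl, by rw [horb_p', ← hp']; rfl⟩
    have hδpp : δ p p' = if (eΩ (orb x)).val < (eΩ (orb y)).val then 3 else 2 := by
      rw [hδ_cross _ _ (by rw [horb_p, horb_p']; exact h), if_pos hSp1, horb_p, horb_p']
    have himg := hσ p p' hne
    have ho1 : orb (σ p) = orb x := by rw [horbσ, horb_p]
    have ho2 : orb (σ p') = orb y := by rw [horbσ, horb_p']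
    have hone : orb (σ p) ≠ orb (σ p') := by rw [ho1, ho2]; exact h
    rw [hδ_cross _ _ hone] at himg
    simp only [ho1, ho2] at himg
    rw [hδpp] at himg
    have hsimg : Sp (σ p) (σ p') := by
      by_contra hs
      rw [if_neg hs] at himg
      by_cases hv : (eΩ (orb x)).val < (eΩ (orb y)).val
      · rw [if_pos hv] at himg
        exact absurd himg (by decide)
      · rw [if_neg hv] at himg
        exact absurd himg (by decide)
    obtain ⟨c, hcA, hc1, hc2⟩ := hsimg
    rw [ho1, ← hp] at hc1
    rw [ho2, ← hp'] at hc2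
    -- c agrees with σ on both orbits
    have key : ∀ (ωq : Ω) (bq : Equiv.Perm X), bq ∈ A →
        (∀ z, orb z = ωq → σ z = bq z) → c (bp ωq) = σ (bp ωq) →
        ∀ z, orb z = ωq → σ z = c z := by
      intro ωq bq hbqA hbq hcp z hz
      obtain ⟨a, haA, hap⟩ := (hmem z ωq).mp hz
      calc σ z = bq z := hbq z hz
        _ = bq (a (bp ωq)) := by rw [hap]
        _ = (bq * a) (bp ωq) := rfl
        _ = (a * bq) (bp ωq) := by rw [hab bq hbqA a haA]
        _ = a (bq (bp ωq)) := rfl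
        _ = a (σ (bp ωq)) := by rw [hbq (bp ωq) (horb_bp ωq)]
        _ = a (c (bp ωq)) := by rw [hcp]
        _ = (a * c) (bp ωq) := rfl
        _ = (c * a) (bp ωq) := by rw [hab a haA c hcA]
        _ = c (a (bp ωq)) := rfl
        _ = c z := by rw [hap]
    refine ⟨c, hcA, ?_, ?_⟩
    · refine key (orb x) b hbA hb ?_ x rfl
      rw [← hp]
      exact hc1
    · refine key (orb y) b' hb'A hb' ?_ y rfl
      rw [← hp']
      exact hc2

end AuxW

/-- An abelian subgroup `A ≤ Sym(X)` is the automorphism group of some coloured digraph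
on `X` iff it is the automorphism group of some 4-coloured digraph on `X`. -/
theorem statement3 (X : Type*) [Fintype X] (A : Subgroup (Equiv.Perm X))
    (hab : ∀ a ∈ A, ∀ b ∈ A, a * b = b * a) :
    InDGR A ↔ InDGR4 A := by
  constructor
  · rintro ⟨k, hk, γ, hγ⟩
    obtain ⟨δ, hInv, hmain⟩ := main_construction A hab
    refine ⟨δ, fun σ => ⟨fun hσA x y hxy => hInv σ hσA x y, fun hσ => ?_⟩⟩
    have hpair := hmain σ hσ
    apply (hγ σ).mpr
    intro x y hxy
    obtain ⟨c, hcA, hcx, hcy⟩ := hpair x y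
    rw [hcx, hcy]
    exact (hγ c).mp hcA x y hxy
  · rintro ⟨γ, hγ⟩
    exact ⟨4, by norm_num, γ, hγ⟩
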